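/- Under the Gram hypothesis on f^1,…,f^K and assuming v_w ≠ 0, for all σ, γ ∈ {1,…,n}: ∑_{μ=1}^K (f^μ_σ − (v_σ/v_w)·f^μ_w)·conj(f^μ_γ − (v_γ/v_w)·f^μ_w) = N·ν^{N−1}·h_{σγ}. (In the paper's notation, ∑_μ Z_σ f^{(μ)} · Z_{γ̄} f̄^{(μ)} = N ν^{N−1} h_{σγ̄}; this is the computation of ∑_μ |∂̄_b f̄^{(μ)}|² in the proof of Theorem 1.1.) -/
import Mathlib


open ComplexConjugate Matrix

/-- Under the Gram hypothesis and `v_w ≠ 0`, for all `σ, γ ∈ {1,…,n}`: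
`∑_μ (f^μ_σ − (v_σ/v_w) f^μ_w)·conj(f^μ_γ − (v_γ/v_w) f^μ_w) = N ν^{N−1} h_{σγ}`,
i.e. `∑_μ Z_σ f^{(μ)} · Z_{γ̄} f̄^{(μ)} = N ν^{N−1} h_{σγ̄}`. -/
theorem stmt_12 (n : ℕ) (hn : 1 ≤ n)
    (H : Matrix (Fin (n + 1)) (Fin (n + 1)) ℂ) (v ξ : Fin (n + 1) → ℂ) (r : ℝ)
    (hξH : ∀ k, ∑ j, ξ j * H j k = (r : ℂ) * conj (v k))
    (hvξ : ∑ j, v j * ξ j = 1)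
    (w : Fin (n + 1)) (hw : w = Fin.last n)
    (hvw : v w ≠ 0)
    (h : Matrix (Fin n) (Fin n) ℂ)
    (hh : ∀ α β : Fin n, h α β =
      H α.castSucc β.castSucc - v α.castSucc * H w β.castSucc / v w
        - conj (v β.castSucc) * H α.castSucc w / conj (v w)
        + H w w * v α.castSucc * conj (v β.castSucc) / (v w * conj (v w)))
    (K : ℕ) (hK : 1 ≤ K) (ν N : ℝ) (hν : 0 < ν) (hN : 0 < N)
    (f : Fin K → Fin (n + 1) → ℂ)
    (hGram : ∀ j k, ∑ μ, f μ j * conj (f μ k) =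
      ((N * ν ^ (N - 2) : ℝ) : ℂ) * ((ν : ℂ) * H j k + ((N - 1 : ℝ) : ℂ) * v j * conj (v k))) :
    ∀ σ γ : Fin n,
      ∑ μ, (f μ σ.castSucc - (v σ.castSucc / v w) * f μ w) *
          conj (f μ γ.castSucc - (v γ.castSucc / v w) * f μ w) =
        ((N * ν ^ (N - 1) : ℝ) : ℂ) * h σ γ := by
  intro σ γ
  have hvwc : conj (v w) ≠ 0 := by simpa using hvw
  have hpow : ((N * ν ^ (N - 2) : ℝ) : ℂ) * (ν : ℂ) = ((N * ν ^ (N - 1) : ℝ) : ℂ) := by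
    have h1 : ν ^ (N - 2) * ν = ν ^ (N - 1) := by
      have := (Real.rpow_add hν (N - 2) 1).symm
      rw [Real.rpow_one] at this
      rw [this]; ring_nf
    push_cast [← h1]; ring
  have key : ∀ μ, (f μ σ.castSucc - (v σ.castSucc / v w) * f μ w) *
      conj (f μ γ.castSucc - (v γ.castSucc / v w) * f μ w) =
      f μ σ.castSucc * conj (f μ γ.castSucc)
        - conj (v γ.castSucc / v w) * (f μ σ.castSucc * conj (f μ w))
        - (v σ.castSucc / v w) * (f μ w * conj (f μ γ.castSucc))
        + (v σ.castSucc / v w) * conj (v γ.castSucc / v w) * (f μ w * conj (f μ w)) := by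
    intro μ
    simp only [map_sub, _root_.map_mul]
    ring
  rw [Finset.sum_congr rfl fun μ _ => key μ]
  simp only [Finset.sum_add_distrib, Finset.sum_sub_distrib, ← Finset.mul_sum]
  rw [hGram, hGram, hGram, hGram, hh]
  rw [show ((N * ν ^ (N - 1) : ℝ) : ℂ) = ((N * ν ^ (N - 2) : ℝ) : ℂ) * (ν : ℂ) from hpow.symm]
  simp only [map_div₀]
  field_simp
  ring
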